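/- Let G be a group and x ∈ MonoidAlgebra (ZMod 2) G. If x is right quasi-regular, i.e., there exists y ∈ MonoidAlgebra (ZMod 2) G with x + y − x * y = 0, then the support of x has an even number of elements. -/

import Mathlib

theorem stmt_12 {G : Type*} [Group G] (x : MonoidAlgebra (ZMod 2) G)
    (hx : ∃ y : MonoidAlgebra (ZMod 2) G, x + y - x * y = 0) :
    Even (Finsupp.support x.coeff).card := by
  obtain ⟨y, hy⟩ := hx
  set ε := MonoidAlgebra.lift (ZMod 2) (ZMod 2) G 1 with hε
  have h0 : ε x + ε y - ε x * ε y = 0 := by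
    have := congrArg ε hy
    simpa using this
  have hx0 : ε x = 0 := by
    revert h0
    generalize ε x = a; generalize ε y = b
    revert a b; decide
  have hsum : ε x = ∑ g ∈ x.coeff.support, x.coeff g := by
    rw [hε, MonoidAlgebra.lift_apply]
    simp [Finsupp.sum]
  have hone : ∀ a : ZMod 2, a ≠ 0 → a = 1 := by decide
  have hcard : ((x.coeff.support.card : ℕ) : ZMod 2) = 0 := by
    rw [← hx0, hsum, Finset.sum_congr rfl
      (fun g hg => hone _ (Finsupp.mem_support_iff.mp hg)),
      Finset.sum_const, nsmul_eq_mul, mul_one]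
  have := (ZMod.natCast_eq_zero_iff _ 2).mp hcard
  exact even_iff_two_dvd.mpr this
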